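/- For integers k ≥ 1 and n ≥ 1, let χ_n be the characteristic function of the interval u_1^{k−1}(v_n([0,1))) (where u_1^{k−1} denotes the (k−1)-fold iterate of u_1, with u_1^0 = id). Then the total variation of Lᵏ χ_n on [0,1) satisfies Var(Lᵏ χ_n) ≥ 4 a_n n⁴ (|J|/N)^{k−1}, while Var(χ_n) ≤ 2 and sup|χ_n| ≤ 1. -/

import Mathlib

open MeasureTheory Set Filter

noncomputable section

namespace Gouezel

/-- `b a n = 4 * ∑_{k=1}^n a_k` (left endpoints of the intervals `I_n`). -/
def b (a : ℕ → ℝ) (n : ℕ) : ℝ := 4 * ∑ k ∈ Finset.range n, a (k + 1)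

/-- `b_∞ = 4 * ∑_{n=1}^∞ a_n`. -/
def binf (a : ℕ → ℝ) : ℝ := 4 * ∑' n : ℕ, a (n + 1)

/-- The length `|J| = 1 - b_∞` of the interval `J = [b_∞, 1)`. -/
def lenJ (a : ℕ → ℝ) : ℝ := 1 - binf a

/-- `v_n'(x) = a_n (1 + 2 cos²(2π n⁴ x))`. -/
def vd (a : ℕ → ℝ) (n : ℕ) (x : ℝ) : ℝ :=
  a n * (1 + 2 * Real.cos (2 * Real.pi * (n : ℝ) ^ 4 * x) ^ 2)

/-- `w_n'(x) = a_n (1 + 2 sin²(2π n⁴ x))`. -/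
def wd (a : ℕ → ℝ) (n : ℕ) (x : ℝ) : ℝ :=
  a n * (1 + 2 * Real.sin (2 * Real.pi * (n : ℝ) ^ 4 * x) ^ 2)

/-- The inverse branch `v_n(x) = b_{n-1} + ∫_0^x v_n'(t) dt`. -/
def v (a : ℕ → ℝ) (n : ℕ) (x : ℝ) : ℝ := b a (n - 1) + ∫ t in (0:ℝ)..x, vd a n t

/-- The inverse branch `w_n(x) = b_{n-1} + 2 a_n + ∫_0^x w_n'(t) dt`. -/
def w (a : ℕ → ℝ) (n : ℕ) (x : ℝ) : ℝ :=
  b a (n - 1) + 2 * a n + ∫ t in (0:ℝ)..x, wd a n t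

/-- The affine inverse branches `u_j(x) = b_∞ + (j-1)|J|/N + (|J|/N) x`, `1 ≤ j ≤ N`. -/
def u (a : ℕ → ℝ) (N : ℕ) (j : ℕ) (x : ℝ) : ℝ :=
  binf a + ((j : ℝ) - 1) * (lenJ a / N) + (lenJ a / N) * x

/-- The transfer operator on complex-valued functions. -/
def L (a : ℕ → ℝ) (N : ℕ) (f : ℝ → ℂ) (x : ℝ) : ℂ :=
  (∑' n : ℕ, ((vd a (n + 1) x : ℂ) * f (v a (n + 1) x)
      + (wd a (n + 1) x : ℂ) * f (w a (n + 1) x)))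
    + ((lenJ a / (N : ℝ) : ℝ) : ℂ) * ∑ j ∈ Finset.range N, f (u a N (j + 1) x)

/-- The transfer operator on real-valued functions. -/
def LR (a : ℕ → ℝ) (N : ℕ) (f : ℝ → ℝ) (x : ℝ) : ℝ :=
  (∑' n : ℕ, (vd a (n + 1) x * f (v a (n + 1) x) + wd a (n + 1) x * f (w a (n + 1) x)))
    + (lenJ a / N) * ∑ j ∈ Finset.range N, f (u a N (j + 1) x)

/-- The part `L_n` of the transfer operator coming from the branches `v_n, w_n`. -/
def Ln (a : ℕ → ℝ) (n : ℕ) (f : ℝ → ℂ) (x : ℝ) : ℂ :=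
  (vd a n x : ℂ) * f (v a n x) + (wd a n x : ℂ) * f (w a n x)

/-- Sup norm of `f` on `[0,1)`. -/
def supNorm (f : ℝ → ℂ) : ℝ := ⨆ x : Ico (0:ℝ) 1, ‖f x.1‖

/-- Best Lipschitz constant of `f` on `[0,1)` (the term at `x = y` is `0/0 = 0`). -/
def lipConst (f : ℝ → ℂ) : ℝ :=
  ⨆ p : Ico (0:ℝ) 1 × Ico (0:ℝ) 1, ‖f p.1.1 - f p.2.1‖ / |p.1.1 - p.2.1|

/-- Lipschitz norm `‖f‖_Lip = sup|f| + Lip(f)` on `[0,1)`. -/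
def lipNorm (f : ℝ → ℂ) : ℝ := supNorm f + lipConst f

/-- `f` is bounded and Lipschitz on `[0,1)`. -/
def BddLip (f : ℝ → ℂ) : Prop :=
  ∃ K : ℝ, (∀ x ∈ Ico (0:ℝ) 1, ‖f x‖ ≤ K) ∧
    ∀ x ∈ Ico (0:ℝ) 1, ∀ y ∈ Ico (0:ℝ) 1, ‖f x - f y‖ ≤ K * |x - y|

/-- The specific choice `a_n = 1/(100 n³)`. -/
def aa (n : ℕ) : ℝ := 1 / (100 * (n : ℝ) ^ 3)

/-- Standing hypotheses on the sequence `(a_n)`: positivity and `∑ a_n < 1/4`. -/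
def StdHyp (a : ℕ → ℝ) : Prop :=
  (∀ n : ℕ, 1 ≤ n → 0 < a n) ∧ Summable (fun n : ℕ => a (n + 1)) ∧
    (∑' n : ℕ, a (n + 1)) < 1 / 4

/-- `T : [0,1) → [0,1)` has the maps `v_n, w_n` (`n ≥ 1`) and `u_j` (`1 ≤ j ≤ N`)
as inverse branches. -/
def InverseBranches (a : ℕ → ℝ) (N : ℕ) (T : ℝ → ℝ) : Prop :=
  MapsTo T (Ico (0:ℝ) 1) (Ico (0:ℝ) 1) ∧
    ∀ x ∈ Ico (0:ℝ) 1,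
      (∀ n : ℕ, 1 ≤ n → T (v a n x) = x ∧ T (w a n x) = x) ∧
      (∀ j : ℕ, 1 ≤ j → j ≤ N → T (u a N j x) = x)

/-! ### helper lemmas -/

section Helpers

variable {a : ℕ → ℝ} (ha : StdHyp a)

local notation "π" => Real.pi

include ha

lemma apos {n : ℕ} (hn : 1 ≤ n) : 0 < a n := ha.1 n hn

lemma b_mono : Monotone (b a) := by
  intro m m' h
  unfold b
  have : ∑ k ∈ Finset.range m, a (k+1) ≤ ∑ k ∈ Finset.range m', a (k+1) :=
    Finset.sum_le_sum_of_subset_of_nonneg (Finset.range_subset_range.2 h)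
      (fun k _ _ => (ha.1 (k+1) (Nat.le_add_left 1 k)).le)
  linarith

lemma b_nonneg (m : ℕ) : 0 ≤ b a m := by
  have := b_mono ha (Nat.zero_le m)
  simpa [b] using this

lemma b_le_binf (m : ℕ) : b a m ≤ binf a := by
  unfold b binf
  gcongr
  exact ha.2.1.sum_le_tsum (Finset.range m) (fun k _ => (ha.1 (k+1) (Nat.le_add_left 1 k)).le)

lemma binf_nonneg : 0 ≤ binf a := le_trans (b_nonneg ha 0) (b_le_binf ha 0)

lemma binf_lt_one : binf a < 1 := by
  have := ha.2.2
  unfold binf; linarith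

lemma lenJ_pos : 0 < lenJ a := by
  have := binf_lt_one ha; unfold lenJ; linarith

lemma lenJ_le_one : lenJ a ≤ 1 := by
  have := binf_nonneg ha; unfold lenJ; linarith

lemma b_succ {n : ℕ} (hn : 1 ≤ n) : b a n = b a (n - 1) + 4 * a n := by
  obtain ⟨m, rfl⟩ := Nat.exists_eq_add_of_le' hn
  simp only [Nat.add_sub_cancel, b, Finset.sum_range_succ]
  ring

omit ha

lemma cpos {n : ℕ} (hn : 1 ≤ n) : (0:ℝ) < 4*π*(n:ℝ)^4 := by
  have h1 : (1:ℝ) ≤ (n:ℝ) := by exact_mod_cast hn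
  have := Real.pi_pos
  positivity

lemma hasDerivAt_Fv (an : ℝ) {n : ℕ} (hn : 1 ≤ n) (t : ℝ) :
    HasDerivAt (fun t : ℝ => an * (2*t + Real.sin (4*π*(n:ℝ)^4*t)/(4*π*(n:ℝ)^4)))
      (an * (1 + 2 * Real.cos (2 * π * (n:ℝ) ^ 4 * t) ^ 2)) t := by
  have hc : (4*π*(n:ℝ)^4) ≠ 0 := (cpos hn).ne'
  have h1 : HasDerivAt (fun t : ℝ => Real.sin (4*π*(n:ℝ)^4*t))
      (Real.cos (4*π*(n:ℝ)^4*t) * (4*π*(n:ℝ)^4)) t := by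
    have := (Real.hasDerivAt_sin (4*π*(n:ℝ)^4*t)).comp t
      ((hasDerivAt_id t).const_mul (4*π*(n:ℝ)^4))
    simp only [mul_one] at this
    exact this
  have h2 : HasDerivAt (fun t : ℝ => 2*t + Real.sin (4*π*(n:ℝ)^4*t)/(4*π*(n:ℝ)^4))
      (2 + Real.cos (4*π*(n:ℝ)^4*t)) t := by
    have := ((hasDerivAt_id t).const_mul (2:ℝ)).add (h1.div_const (4*π*(n:ℝ)^4))
    refine this.congr_deriv ?_
    rw [mul_div_assoc, div_self hc]; ring
  refine (h2.const_mul an).congr_deriv ?_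
  have : Real.cos (2 * π * (n:ℝ) ^ 4 * t) ^ 2 = 1/2 + Real.cos (2*(2 * π * (n:ℝ) ^ 4 * t))/2 :=
    Real.cos_sq _
  rw [this]; ring_nf

lemma hasDerivAt_Fw (an : ℝ) {n : ℕ} (hn : 1 ≤ n) (t : ℝ) :
    HasDerivAt (fun t : ℝ => an * (2*t - Real.sin (4*π*(n:ℝ)^4*t)/(4*π*(n:ℝ)^4)))
      (an * (1 + 2 * Real.sin (2 * π * (n:ℝ) ^ 4 * t) ^ 2)) t := by
  have hc : (4*π*(n:ℝ)^4) ≠ 0 := (cpos hn).ne'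
  have h1 : HasDerivAt (fun t : ℝ => Real.sin (4*π*(n:ℝ)^4*t))
      (Real.cos (4*π*(n:ℝ)^4*t) * (4*π*(n:ℝ)^4)) t := by
    have := (Real.hasDerivAt_sin (4*π*(n:ℝ)^4*t)).comp t
      ((hasDerivAt_id t).const_mul (4*π*(n:ℝ)^4))
    simp only [mul_one] at this
    exact this
  have h2 : HasDerivAt (fun t : ℝ => 2*t - Real.sin (4*π*(n:ℝ)^4*t)/(4*π*(n:ℝ)^4))
      (2 - Real.cos (4*π*(n:ℝ)^4*t)) t := by
    have := ((hasDerivAt_id t).const_mul (2:ℝ)).sub (h1.div_const (4*π*(n:ℝ)^4))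
    refine this.congr_deriv ?_
    rw [mul_div_assoc, div_self hc]; ring
  refine (h2.const_mul an).congr_deriv ?_
  have hs : Real.sin (2 * π * (n:ℝ) ^ 4 * t) ^ 2
      = 1 - Real.cos (2 * π * (n:ℝ) ^ 4 * t) ^ 2 := by
    have := Real.sin_sq_add_cos_sq (2 * π * (n:ℝ) ^ 4 * t); linarith
  have hcs : Real.cos (2 * π * (n:ℝ) ^ 4 * t) ^ 2
      = 1/2 + Real.cos (2*(2 * π * (n:ℝ) ^ 4 * t))/2 := Real.cos_sq _
  rw [hs, hcs]; ring_nf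

lemma sin_c_zero {n : ℕ} : Real.sin (4*π*(n:ℝ)^4*1) = 0 := by
  have : (4*π*(n:ℝ)^4*1) = ((4*(n:ℕ)^4 : ℤ) : ℝ) * π := by push_cast; ring
  rw [this, Real.sin_int_mul_pi]

lemma v_eq {n : ℕ} (hn : 1 ≤ n) (x : ℝ) :
    v a n x = b a (n-1) + a n * (2*x + Real.sin (4*π*(n:ℝ)^4*x)/(4*π*(n:ℝ)^4)) := by
  unfold v
  congr 1
  have := intervalIntegral.integral_eq_sub_of_hasDerivAt
    (f := fun t : ℝ => a n * (2*t + Real.sin (4*π*(n:ℝ)^4*t)/(4*π*(n:ℝ)^4)))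
    (f' := vd a n) (a := (0:ℝ)) (b := x)
    (fun t _ => hasDerivAt_Fv (a n) hn t)
    (by apply Continuous.intervalIntegrable; unfold vd; fun_prop)
  rw [this]; simp

lemma w_eq {n : ℕ} (hn : 1 ≤ n) (x : ℝ) :
    w a n x = b a (n-1) + 2 * a n
      + a n * (2*x - Real.sin (4*π*(n:ℝ)^4*x)/(4*π*(n:ℝ)^4)) := by
  unfold w
  congr 1
  have := intervalIntegral.integral_eq_sub_of_hasDerivAt
    (f := fun t : ℝ => a n * (2*t - Real.sin (4*π*(n:ℝ)^4*t)/(4*π*(n:ℝ)^4)))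
    (f' := wd a n) (a := (0:ℝ)) (b := x)
    (fun t _ => hasDerivAt_Fw (a n) hn t)
    (by apply Continuous.intervalIntegrable; unfold wd; fun_prop)
  rw [this]; simp

include ha

lemma v_strictMono {n : ℕ} (hn : 1 ≤ n) : StrictMono (v a n) := by
  have : (v a n) = fun x => b a (n-1)
      + a n * (2*x + Real.sin (4*π*(n:ℝ)^4*x)/(4*π*(n:ℝ)^4)) := funext (v_eq hn)
  rw [this]
  apply strictMono_of_deriv_pos
  intro x
  have h := ((hasDerivAt_Fv (a n) hn x).const_add (b a (n-1)))
  rw [h.deriv]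
  have hpos := apos ha hn
  nlinarith [sq_nonneg (Real.cos (2 * π * (n:ℝ) ^ 4 * x))]

lemma w_strictMono {n : ℕ} (hn : 1 ≤ n) : StrictMono (w a n) := by
  have : (w a n) = fun x => b a (n-1) + 2 * a n
      + a n * (2*x - Real.sin (4*π*(n:ℝ)^4*x)/(4*π*(n:ℝ)^4)) := funext (w_eq hn)
  rw [this]
  apply strictMono_of_deriv_pos
  intro x
  have h := ((hasDerivAt_Fw (a n) hn x).const_add (b a (n-1) + 2 * a n))
  rw [h.deriv]
  have hpos := apos ha hn
  nlinarith [sq_nonneg (Real.sin (2 * π * (n:ℝ) ^ 4 * x))]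

lemma v_zero {n : ℕ} (hn : 1 ≤ n) : v a n 0 = b a (n-1) := by
  rw [v_eq hn]; simp

lemma v_one {n : ℕ} (hn : 1 ≤ n) : v a n 1 = b a (n-1) + 2 * a n := by
  rw [v_eq hn, sin_c_zero]; ring

lemma w_zero {n : ℕ} (hn : 1 ≤ n) : w a n 0 = b a (n-1) + 2 * a n := by
  rw [w_eq hn]; simp

lemma w_one {n : ℕ} (hn : 1 ≤ n) : w a n 1 = b a n := by
  rw [w_eq hn, sin_c_zero, b_succ ha hn]; ring

lemma v_mem {n : ℕ} (hn : 1 ≤ n) {x : ℝ} (hx : x ∈ Ico (0:ℝ) 1) :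
    v a n x ∈ Ico (b a (n-1)) (b a (n-1) + 2 * a n) := by
  constructor
  · rw [← v_zero ha hn]; exact (v_strictMono ha hn).monotone hx.1
  · rw [← v_one ha hn]; exact (v_strictMono ha hn) hx.2

lemma w_mem {n : ℕ} (hn : 1 ≤ n) {x : ℝ} (hx : x ∈ Ico (0:ℝ) 1) :
    w a n x ∈ Ico (b a (n-1) + 2 * a n) (b a n) := by
  constructor
  · rw [← w_zero ha hn]; exact (w_strictMono ha hn).monotone hx.1
  · rw [← w_one ha hn]; exact (w_strictMono ha hn) hx.2

lemma vw_lt_binf {n : ℕ} (hn : 1 ≤ n) {x : ℝ} (hx : x ∈ Ico (0:ℝ) 1) :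
    v a n x < binf a ∧ w a n x < binf a ∧ 0 ≤ v a n x ∧ 0 ≤ w a n x := by
  have h1 := v_mem ha hn hx
  have h2 := w_mem ha hn hx
  have h3 : b a (n-1) + 2 * a n ≤ b a n := by
    rw [b_succ ha hn]; have := apos ha hn; linarith
  have h4 := b_le_binf ha n
  have h5 := b_nonneg ha (n-1)
  have h6 := apos ha hn
  exact ⟨lt_of_lt_of_le h1.2 (le_trans h3 h4), lt_of_lt_of_le h2.2 h4,
    le_trans h5 h1.1, le_trans (by linarith) h2.1⟩

/-- the image of [0,1) under `v n` is exactly an Ico. -/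
lemma v_image {n : ℕ} (hn : 1 ≤ n) :
    v a n '' Ico (0:ℝ) 1 = Ico (b a (n-1)) (b a (n-1) + 2 * a n) := by
  apply Subset.antisymm
  · rintro _ ⟨x, hx, rfl⟩; exact v_mem ha hn hx
  · have hc : ContinuousOn (v a n) (Icc 0 1) := by
      have : (v a n) = fun x => b a (n-1)
          + a n * (2*x + Real.sin (4*π*(n:ℝ)^4*x)/(4*π*(n:ℝ)^4)) := funext (v_eq hn)
      rw [this]; fun_prop
    have := intermediate_value_Ico (by norm_num : (0:ℝ) ≤ 1) hc
    rw [v_zero ha hn, v_one ha hn] at this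
    exact this

end Helpers

/-! ### second batch: u, sets, LR computations -/

section Helpers2

variable {a : ℕ → ℝ} (ha : StdHyp a) {N : ℕ} (hN : 1 ≤ N)

local notation "π" => Real.pi

lemma u_eq (N : ℕ) (j : ℕ) (x : ℝ) :
    u a N (j + 1) x = binf a + (j : ℝ) * (lenJ a / N) + (lenJ a / N) * x := by
  unfold u; push_cast; ring

lemma u_one_eq (N : ℕ) (x : ℝ) : u a N 1 x = binf a + (lenJ a / N) * x := by
  have := u_eq (a := a) N 0 x; simpa using this

include ha hN

lemma c_pos : 0 < lenJ a / N := by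
  have := lenJ_pos ha
  have hN' : (0:ℝ) < N := by exact_mod_cast hN
  positivity

lemma binf_add_le_one {j : ℕ} (hj : j ≤ N) : binf a + (j:ℝ) * (lenJ a / N) ≤ 1 := by
  have hN' : (0:ℝ) < N := by exact_mod_cast hN
  have hj' : (j:ℝ) ≤ (N:ℝ) := by exact_mod_cast hj
  have hl := lenJ_pos ha
  have : (j:ℝ) * (lenJ a / N) ≤ (N:ℝ) * (lenJ a / N) := by
    apply mul_le_mul_of_nonneg_right hj' (le_of_lt (c_pos ha hN))
  have hNl : (N:ℝ) * (lenJ a / N) = lenJ a := by field_simp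
  unfold lenJ at *
  nlinarith

lemma u_mem {j : ℕ} (hj : j < N) {x : ℝ} (hx : x ∈ Ico (0:ℝ) 1) :
    u a N (j + 1) x ∈ Ico (binf a + (j:ℝ) * (lenJ a / N))
      (binf a + ((j:ℝ) + 1) * (lenJ a / N)) := by
  rw [u_eq]
  have hc := c_pos ha hN
  constructor
  · nlinarith [hx.1]
  · nlinarith [hx.2]

lemma u_mem01 {j : ℕ} (hj : j < N) {x : ℝ} (hx : x ∈ Ico (0:ℝ) 1) :
    u a N (j + 1) x ∈ Ico (0:ℝ) 1 := by
  have h := u_mem ha hN hj hx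
  have h2 : binf a + ((j:ℝ) + 1) * (lenJ a / N) ≤ 1 := by
    have : ((j:ℝ) + 1) = ((j+1 : ℕ) : ℝ) := by push_cast; ring
    rw [this]; exact binf_add_le_one ha hN hj
  have hb := binf_nonneg ha
  have hc := c_pos ha hN
  constructor
  · have := h.1; nlinarith [Nat.cast_nonneg (α := ℝ) j]
  · exact lt_of_lt_of_le h.2 h2

lemma u_one_image {S : Set ℝ} (hS : S ⊆ Ico (0:ℝ) 1) :
    u a N 1 '' S ⊆ Ico (binf a) (binf a + lenJ a / N) := by
  rintro _ ⟨y, hy, rfl⟩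
  rw [u_one_eq]
  have hc := c_pos ha hN
  have h1 := (hS hy).1
  have h2 := (hS hy).2
  constructor
  · nlinarith
  · nlinarith

lemma u_one_image01 {S : Set ℝ} (hS : S ⊆ Ico (0:ℝ) 1) :
    u a N 1 '' S ⊆ Ico (0:ℝ) 1 := by
  refine (u_one_image ha hN hS).trans ?_
  have hb := binf_nonneg ha
  have h2 : binf a + (1:ℝ) * (lenJ a / N) ≤ 1 := by
    simpa using binf_add_le_one ha hN hN
  intro y hy
  exact ⟨le_trans hb hy.1, lt_of_lt_of_le hy.2 (by simpa using h2)⟩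

lemma u_one_inj : Function.Injective (u a N 1) := by
  intro x y hxy
  rw [u_one_eq, u_one_eq] at hxy
  have hc := (c_pos ha hN).ne'
  have hl := (lenJ_pos ha).ne'
  field_simp at hxy
  exact mul_left_cancel₀ hl (add_left_cancel hxy)

lemma u_one_image_Ico {α β : ℝ} :
    u a N 1 '' Ico α β
      = Ico (binf a + (lenJ a / N) * α) (binf a + (lenJ a / N) * β) := by
  have hc := c_pos ha hN
  ext y
  simp only [mem_image, mem_Ico]
  constructor
  · rintro ⟨x, ⟨h1, h2⟩, rfl⟩
    rw [u_one_eq]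
    constructor <;> nlinarith
  · rintro ⟨h1, h2⟩
    refine ⟨(y - binf a) / (lenJ a / N), ⟨?_, ?_⟩, ?_⟩
    · rw [le_div_iff₀ hc]; nlinarith
    · rw [div_lt_iff₀ hc]; nlinarith
    · rw [u_one_eq, mul_comm (lenJ a / (N:ℝ)), div_mul_cancel₀ _ hc.ne']
      ring

end Helpers2

/-! ### third batch: the sets S j and LR computations -/

section Helpers3

variable {a : ℕ → ℝ} (ha : StdHyp a) {N : ℕ} (hN : 1 ≤ N) {n : ℕ} (hn : 1 ≤ n)

local notation "π" => Real.pi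

include ha hn

lemma vw_mem01 {m : ℕ} (hm : 1 ≤ m) {x : ℝ} (hx : x ∈ Ico (0:ℝ) 1) :
    v a m x ∈ Ico (0:ℝ) 1 ∧ w a m x ∈ Ico (0:ℝ) 1 := by
  obtain ⟨h1, h2, h3, h4⟩ := vw_lt_binf ha hm hx
  have h5 := binf_lt_one ha
  exact ⟨⟨h3, lt_trans h1 h5⟩, ⟨h4, lt_trans h2 h5⟩⟩

lemma V_sub01 : v a n '' Ico (0:ℝ) 1 ⊆ Ico (0:ℝ) 1 := by
  rintro _ ⟨x, hx, rfl⟩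
  exact (vw_mem01 ha hn hn hx).1

include hN

lemma S_sub01 (j : ℕ) : (u a N 1)^[j] '' (v a n '' Ico (0:ℝ) 1) ⊆ Ico (0:ℝ) 1 := by
  induction j with
  | zero => simpa using V_sub01 ha hn
  | succ j ih =>
    rw [Function.iterate_succ', Set.image_comp]
    exact u_one_image01 ha hN ih

lemma S_sub_binf (j : ℕ) :
    (u a N 1)^[j+1] '' (v a n '' Ico (0:ℝ) 1)
      ⊆ Ico (binf a) (binf a + lenJ a / N) := by
  rw [Function.iterate_succ', Set.image_comp]
  exact u_one_image ha hN (S_sub01 ha hN hn j)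

lemma S_Ico (j : ℕ) : ∃ α β : ℝ, α ≤ β ∧
    (u a N 1)^[j] '' (v a n '' Ico (0:ℝ) 1) = Ico α β := by
  induction j with
  | zero =>
    refine ⟨b a (n-1), b a (n-1) + 2 * a n, by nlinarith [apos ha hn], ?_⟩
    simpa using v_image ha hn
  | succ j ih =>
    obtain ⟨α, β, hαβ, hS⟩ := ih
    refine ⟨binf a + (lenJ a / N) * α, binf a + (lenJ a / N) * β, ?_, ?_⟩
    · have hc := c_pos ha hN; nlinarith
    · rw [Function.iterate_succ', Set.image_comp, hS, u_one_image_Ico ha hN]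

omit hn

lemma LR_congr {f g : ℝ → ℝ} (hfg : EqOn f g (Ico (0:ℝ) 1)) {x : ℝ}
    (hx : x ∈ Ico (0:ℝ) 1) : LR a N f x = LR a N g x := by
  unfold LR
  congr 1
  · apply tsum_congr
    intro m
    have h := vw_mem01 ha (Nat.le_add_left 1 m) (Nat.le_add_left 1 m) hx
    rw [hfg h.1, hfg h.2]
  · congr 1
    apply Finset.sum_congr rfl
    intro j hj
    exact hfg (u_mem01 ha hN (Finset.mem_range.1 hj) hx)

omit ha hN in
lemma LR_smul (r : ℝ) (f : ℝ → ℝ) (x : ℝ) :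
    LR a N (fun y => r * f y) x = r * LR a N f x := by
  unfold LR
  rw [mul_add]
  congr 1
  · rw [← tsum_mul_left]
    apply tsum_congr
    intro m
    ring
  · simp only [Finset.mul_sum]
    exact Finset.sum_congr rfl (fun j _ => by ring)

include hn

lemma LR_base {x : ℝ} (hx : x ∈ Ico (0:ℝ) 1) :
    LR a N (Set.indicator (v a n '' Ico (0:ℝ) 1) fun _ => (1:ℝ)) x = vd a n x := by
  set χ := Set.indicator (v a n '' Ico (0:ℝ) 1) fun _ => (1:ℝ) with hχ
  have himg : v a n '' Ico (0:ℝ) 1 = Ico (b a (n-1)) (b a (n-1) + 2 * a n) :=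
    v_image ha hn
  have hnotmem : ∀ y : ℝ, (y < b a (n-1) ∨ b a (n-1) + 2 * a n ≤ y) → χ y = 0 := by
    intro y hy
    apply Set.indicator_of_notMem
    rw [himg]
    rintro ⟨h1, h2⟩
    rcases hy with h | h
    · linarith
    · linarith
  unfold LR
  have hu : ∀ j ∈ Finset.range N, χ (u a N (j+1) x) = 0 := by
    intro j hj
    apply hnotmem
    right
    have h1 := (u_mem ha hN (Finset.mem_range.1 hj) hx).1
    have h2 : b a (n-1) + 2 * a n ≤ binf a := by
      have := b_le_binf ha n
      rw [b_succ ha hn] at this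
      nlinarith [apos ha hn]
    have h3 : (0:ℝ) ≤ (j:ℝ) * (lenJ a / N) := by
      have := c_pos ha hN
      positivity
    linarith
  rw [Finset.sum_congr rfl hu]
  simp only [Finset.sum_const, smul_zero, mul_zero, add_zero]
  have htsum : (∑' m : ℕ, (vd a (m + 1) x * χ (v a (m + 1) x)
      + wd a (m + 1) x * χ (w a (m + 1) x))) = vd a n x := by
    rw [tsum_eq_single (n - 1)]
    · have hn1 : n - 1 + 1 = n := Nat.succ_pred_eq_of_pos hn
      rw [hn1]
      have hv1 : χ (v a n x) = 1 := by
        apply Set.indicator_of_mem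
        exact ⟨x, hx, rfl⟩
      have hw0 : χ (w a n x) = 0 := by
        apply hnotmem
        right
        exact (w_mem ha hn hx).1
      rw [hv1, hw0]
      ring
    · intro m hm
      have hm1 : m + 1 ≠ n := fun h => hm (by omega)
      rcases lt_or_gt_of_ne hm1 with h | h
      · -- m + 1 < n, branches land below b a (n-1)
        have hb : b a (m+1) ≤ b a (n-1) := b_mono ha (by omega)
        have hv := (v_mem ha (Nat.le_add_left 1 m) hx).2
        have hw := (w_mem ha (Nat.le_add_left 1 m) hx).2
        have hstep : b a (m+1-1) + 2 * a (m+1) ≤ b a (m+1) := by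
          rw [b_succ ha (Nat.le_add_left 1 m)]
          nlinarith [apos ha (Nat.le_add_left 1 m)]
        have h1 : χ (v a (m+1) x) = 0 := hnotmem _ (Or.inl (by linarith))
        have h2 : χ (w a (m+1) x) = 0 := hnotmem _ (Or.inl (by linarith))
        rw [h1, h2]; ring
      · -- m + 1 > n, branches land at or above b a n = b a (n-1) + 4 a n
        have hb : b a n ≤ b a (m+1-1) := by
          apply b_mono ha; omega
        have hbn : b a (n-1) + 2 * a n ≤ b a n := by
          rw [b_succ ha hn]; nlinarith [apos ha hn]
        have hv := (v_mem ha (Nat.le_add_left 1 m) hx).1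
        have hw := (w_mem ha (Nat.le_add_left 1 m) hx).1
        have ham := apos ha (Nat.le_add_left 1 m)
        have h1 : χ (v a (m+1) x) = 0 := hnotmem _ (Or.inr (by linarith))
        have h2 : χ (w a (m+1) x) = 0 := hnotmem _ (Or.inr (by linarith))
        rw [h1, h2]; ring
  rw [htsum]

lemma LR_step {S : Set ℝ} (hS01 : S ⊆ Ico (0:ℝ) 1) {x : ℝ} (hx : x ∈ Ico (0:ℝ) 1) :
    LR a N (Set.indicator (u a N 1 '' S) fun _ => (1:ℝ)) x
      = (lenJ a / N) * Set.indicator S (fun _ => (1:ℝ)) x := by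
  set χ := Set.indicator (u a N 1 '' S) fun _ => (1:ℝ) with hχ
  have himg := u_one_image ha hN hS01
  have hnotmem : ∀ y : ℝ, (y < binf a ∨ binf a + lenJ a / N ≤ y) → χ y = 0 := by
    intro y hy
    apply Set.indicator_of_notMem
    intro hmem
    have := himg hmem
    rcases hy with h | h
    · exact absurd this.1 (not_le.2 h)
    · exact absurd this.2 (not_lt.2 h)
  unfold LR
  have htsum : (∑' m : ℕ, (vd a (m + 1) x * χ (v a (m + 1) x)
      + wd a (m + 1) x * χ (w a (m + 1) x))) = 0 := by
    rw [show (0:ℝ) = ∑' _ : ℕ, (0:ℝ) by simp]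
    apply tsum_congr
    intro m
    obtain ⟨h1, h2, _, _⟩ := vw_lt_binf ha (Nat.le_add_left 1 m) hx
    rw [hnotmem _ (Or.inl h1), hnotmem _ (Or.inl h2)]
    ring
  rw [htsum, zero_add]
  congr 1
  have hsum : ∀ j ∈ Finset.range N, j ≠ 0 → χ (u a N (j+1) x) = 0 := by
    intro j hj hj0
    apply hnotmem
    right
    have h1 := (u_mem ha hN (Finset.mem_range.1 hj) hx).1
    have hc := c_pos ha hN
    have hj1 : (1:ℝ) ≤ (j:ℝ) := by exact_mod_cast Nat.one_le_iff_ne_zero.2 hj0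
    nlinarith
  rw [Finset.sum_eq_single_of_mem 0 (Finset.mem_range.2 (by omega)) hsum]
  have : χ (u a N (0+1) x) = Set.indicator S (fun _ => (1:ℝ)) x := by
    by_cases hxS : x ∈ S
    · have hm : u a N 1 x ∈ u a N 1 '' S := Set.mem_image_of_mem _ hxS
      rw [Set.indicator_of_mem hxS, hχ, Set.indicator_of_mem hm]
    · rw [Set.indicator_of_notMem hxS, hχ]
      apply Set.indicator_of_notMem
      intro hmem
      exact hxS (((u_one_inj ha hN).mem_set_image).1 hmem)
  rw [this]

end Helpers3

/-! ### fourth batch: variation lemmas -/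

section Helpers4

local notation "π" => Real.pi

lemma evar_sub_le (f g : ℝ → ℝ) (s : Set ℝ) :
    eVariationOn (fun x => f x - g x) s ≤ eVariationOn f s + eVariationOn g s := by
  apply iSup_le
  rintro ⟨m, ⟨uu, hu, us⟩⟩
  calc ∑ i ∈ Finset.range m,
        edist ((fun x => f x - g x) (uu (i+1))) ((fun x => f x - g x) (uu i))
      ≤ ∑ i ∈ Finset.range m,
        (edist (f (uu (i+1))) (f (uu i)) + edist (g (uu (i+1))) (g (uu i))) := by
        apply Finset.sum_le_sum
        intro i _
        simp only [edist_dist, Real.dist_eq]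
        rw [← ENNReal.ofReal_add (abs_nonneg _) (abs_nonneg _)]
        apply ENNReal.ofReal_le_ofReal
        have : f (uu (i+1)) - g (uu (i+1)) - (f (uu i) - g (uu i))
            = (f (uu (i+1)) - f (uu i)) - (g (uu (i+1)) - g (uu i)) := by ring
        rw [this]
        exact abs_sub _ _
    _ = (∑ i ∈ Finset.range m, edist (f (uu (i+1))) (f (uu i)))
        + ∑ i ∈ Finset.range m, edist (g (uu (i+1))) (g (uu i)) :=
        Finset.sum_add_distrib
    _ ≤ eVariationOn f s + eVariationOn g s :=
        add_le_add (eVariationOn.sum_le (f := f) (n := m) hu us) (eVariationOn.sum_le (f := g) (n := m) hu us)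

lemma evar_monotone_le_one {f : ℝ → ℝ} (hf : Monotone f)
    (hf01 : ∀ x, f x ∈ Icc (0:ℝ) 1) (s : Set ℝ) : eVariationOn f s ≤ 1 := by
  apply iSup_le
  rintro ⟨m, ⟨uu, hu, us⟩⟩
  have heq : ∀ i : ℕ, edist (f (uu (i+1))) (f (uu i))
      = ENNReal.ofReal (f (uu (i+1)) - f (uu i)) := by
    intro i
    have hnn : (0:ℝ) ≤ f (uu (i+1)) - f (uu i) := by linarith [hf (hu (Nat.le_succ i))]
    rw [edist_dist, Real.dist_eq, abs_of_nonneg hnn]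
  calc ∑ i ∈ Finset.range m, edist (f (uu (i+1))) (f (uu i))
      = ∑ i ∈ Finset.range m, ENNReal.ofReal (f (uu (i+1)) - f (uu i)) :=
        Finset.sum_congr rfl (fun i _ => heq i)
    _ = ENNReal.ofReal (∑ i ∈ Finset.range m, (f (uu (i+1)) - f (uu i))) := by
        rw [ENNReal.ofReal_sum_of_nonneg]
        intro i _
        linarith [hf (hu (Nat.le_succ i))]
    _ = ENNReal.ofReal (f (uu m) - f (uu 0)) := by
        rw [Finset.sum_range_sub fun i => f (uu i)]
    _ ≤ 1 :=
        ENNReal.ofReal_le_one.2 (by linarith [(hf01 (uu m)).2, (hf01 (uu 0)).1])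

lemma indicator_Ici_monotone (α : ℝ) :
    Monotone (Set.indicator (Ici α) (fun _ => (1:ℝ))) := by
  intro x y hxy
  by_cases hx : x ∈ Ici α
  · rw [Set.indicator_of_mem hx, Set.indicator_of_mem (show y ∈ Ici α from le_trans hx hxy)]
  · rw [Set.indicator_of_notMem hx]
    by_cases hy : y ∈ Ici α
    · rw [Set.indicator_of_mem hy]; norm_num
    · rw [Set.indicator_of_notMem hy]

lemma indicator_Ici_mem01 (α : ℝ) (x : ℝ) :
    Set.indicator (Ici α) (fun _ => (1:ℝ)) x ∈ Icc (0:ℝ) 1 := by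
  by_cases hx : x ∈ Ici α
  · rw [Set.indicator_of_mem hx]; norm_num
  · rw [Set.indicator_of_notMem hx]; norm_num

lemma indicator_Ico_var_le_two {α β : ℝ} (hαβ : α ≤ β) (s : Set ℝ) :
    eVariationOn (Set.indicator (Ico α β) (fun _ => (1:ℝ))) s ≤ 2 := by
  have hdec : Set.indicator (Ico α β) (fun _ => (1:ℝ))
      = fun x => Set.indicator (Ici α) (fun _ => (1:ℝ)) x
        - Set.indicator (Ici β) (fun _ => (1:ℝ)) x := by
    funext x
    rcases lt_or_ge x α with h | h
    · rw [Set.indicator_of_notMem (show x ∉ Ico α β from fun hc => absurd hc.1 (not_le.2 h)),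
        Set.indicator_of_notMem (show x ∉ Ici α from not_le.2 h),
        Set.indicator_of_notMem (show x ∉ Ici β from not_le.2 (lt_of_lt_of_le h hαβ))]
      ring
    · rcases lt_or_ge x β with h2 | h2
      · rw [Set.indicator_of_mem (show x ∈ Ico α β from ⟨h, h2⟩),
          Set.indicator_of_mem (show x ∈ Ici α from h),
          Set.indicator_of_notMem (show x ∉ Ici β from not_le.2 h2)]
        ring
      · rw [Set.indicator_of_notMem (show x ∉ Ico α β from fun hc => absurd hc.2 (not_lt.2 h2)),
          Set.indicator_of_mem (show x ∈ Ici α from h),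
          Set.indicator_of_mem (show x ∈ Ici β from h2)]
        ring
  rw [hdec]
  calc eVariationOn _ s
      ≤ eVariationOn (Set.indicator (Ici α) (fun _ => (1:ℝ))) s
        + eVariationOn (Set.indicator (Ici β) (fun _ => (1:ℝ))) s :=
        evar_sub_le _ _ s
    _ ≤ 1 + 1 :=
        add_le_add
          (evar_monotone_le_one (indicator_Ici_monotone α) (indicator_Ici_mem01 α) s)
          (evar_monotone_le_one (indicator_Ici_monotone β) (indicator_Ici_mem01 β) s)
    _ = 2 := by norm_num

lemma cos_half_int_sq (i : ℕ) :
    Real.cos ((i:ℝ)*π/2)^2 = if Even i then 1 else 0 := by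
  rcases Nat.even_or_odd i with ⟨m, hm⟩ | ⟨m, hm⟩
  · subst hm
    have : ((m + m : ℕ):ℝ)*π/2 = (m:ℕ)*π - 0 := by push_cast; ring
    rw [if_pos ⟨m, rfl⟩, this, Real.cos_nat_mul_pi_sub, Real.cos_zero, mul_one,
      ← pow_mul, mul_comm m 2, pow_mul]
    norm_num
  · subst hm
    have : ((2*m + 1 : ℕ):ℝ)*π/2 = (m:ℕ)*π + π/2 := by push_cast; ring
    rw [this, Real.cos_add_pi_div_two, Real.sin_nat_mul_pi]
    simp [Nat.even_add_one, Nat.even_mul]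

end Helpers4

/-! ### fifth batch: oscillation lower bound -/

section Helpers5

variable {a : ℕ → ℝ} (ha : StdHyp a) {N : ℕ} (hN : 1 ≤ N) {n : ℕ} (hn : 1 ≤ n)

local notation "π" => Real.pi

lemma vd_grid (i : ℕ) (hn : 1 ≤ n) :
    vd a n ((i:ℝ)/(4*(n:ℝ)^4)) = a n * (1 + 2 * (if Even i then 1 else 0)) := by
  unfold vd
  have hn4 : ((n:ℝ))^4 ≠ 0 := by
    have : (1:ℝ) ≤ (n:ℝ) := by exact_mod_cast hn
    positivity
  have harg : 2*π*(n:ℝ)^4 * ((i:ℝ)/(4*(n:ℝ)^4)) = (i:ℝ)*π/2 := by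
    field_simp
    ring
  rw [harg, cos_half_int_sq]

include hn

lemma grid_diff (hap : 0 < a n) (i : ℕ) :
    |vd a n ((((i+1):ℕ):ℝ)/(4*(n:ℝ)^4)) - vd a n ((i:ℝ)/(4*(n:ℝ)^4))| = 2 * a n := by
  rw [vd_grid (i+1) hn, vd_grid i hn]
  rcases Nat.even_or_odd i with he | ho
  · rw [if_pos he, if_neg (by simpa [Nat.even_add_one] using he)]
    rw [abs_of_nonpos (by nlinarith)]
    ring
  · rw [if_neg (Nat.not_even_iff_odd.2 ho), if_pos (by simpa [Nat.even_add_one] using Nat.not_even_iff_odd.2 ho)]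
    rw [abs_of_nonneg (by nlinarith)]
    ring

include ha

lemma grid_var {C : ℝ} (hC : 0 ≤ C) :
    ENNReal.ofReal (4 * a n * (n:ℝ)^4 * C)
      ≤ eVariationOn (fun x => C * vd a n x) (Ico (0:ℝ) 1) := by
  have hap := apos ha hn
  set P := 4*n^4 with hP
  have hn4 : 1 ≤ n^4 := Nat.one_le_pow _ _ hn
  have hP4 : 4 ≤ P := by omega
  have hPpos : (0:ℝ) < (P:ℝ) := by positivity
  set uu : ℕ → ℝ := fun i => ((min i (P-1) : ℕ):ℝ)/(P:ℝ) with huu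
  have hmono : Monotone uu := by
    intro i j hij
    have h : ((min i (P-1) : ℕ):ℝ) ≤ ((min j (P-1) : ℕ):ℝ) := by
      exact_mod_cast min_le_min hij le_rfl
    simp only [huu]
    exact div_le_div_of_nonneg_right h hPpos.le
  have hmem : ∀ i, uu i ∈ Ico (0:ℝ) 1 := by
    intro i
    constructor
    · positivity
    · rw [div_lt_one hPpos]
      exact_mod_cast lt_of_le_of_lt (min_le_right i (P-1)) (by omega)
  have key := eVariationOn.sum_le (f := fun x => C * vd a n x) (n := P-1) hmono hmem
  have hterm : ∀ i ∈ Finset.range (P-1),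
      edist ((fun x => C * vd a n x) (uu (i+1))) ((fun x => C * vd a n x) (uu i))
        = ENNReal.ofReal (C * (2 * a n)) := by
    intro i hi
    have hi' : i < P - 1 := Finset.mem_range.1 hi
    have h1 : uu i = (i:ℝ)/(4*(n:ℝ)^4) := by
      rw [huu]
      simp only [min_eq_left (by omega : i ≤ P-1)]
      congr 1
      rw [hP]; push_cast; ring
    have h2 : uu (i+1) = (((i+1):ℕ):ℝ)/(4*(n:ℝ)^4) := by
      rw [huu]
      simp only [min_eq_left (by omega : i+1 ≤ P-1)]
      congr 1
      rw [hP]; push_cast; ring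
    rw [edist_dist, Real.dist_eq, h1, h2]
    have : C * vd a n ((((i+1):ℕ):ℝ)/(4*(n:ℝ)^4)) - C * vd a n ((i:ℝ)/(4*(n:ℝ)^4))
        = C * (vd a n ((((i+1):ℕ):ℝ)/(4*(n:ℝ)^4)) - vd a n ((i:ℝ)/(4*(n:ℝ)^4))) := by
      ring
    rw [this, abs_mul, abs_of_nonneg hC, grid_diff hn hap i]
  rw [Finset.sum_congr rfl hterm, Finset.sum_const, Finset.card_range, nsmul_eq_mul] at key
  refine le_trans ?_ key
  rw [← ENNReal.ofReal_natCast (P-1), ← ENNReal.ofReal_mul (Nat.cast_nonneg _)]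
  apply ENNReal.ofReal_le_ofReal
  have hcast : ((P-1:ℕ):ℝ) = 4*(n:ℝ)^4 - 1 := by
    rw [Nat.cast_sub (by omega), hP]
    push_cast
    ring
  rw [hcast]
  have hn4' : (1:ℝ) ≤ (n:ℝ)^4 := by exact_mod_cast hn4
  have key2 : 0 ≤ a n * C * (4*(n:ℝ)^4 - 2) :=
    mul_nonneg (mul_nonneg hap.le hC) (by linarith)
  nlinarith [key2]

end Helpers5

/-- with `χ_n` the characteristic function of `u_1^{k-1}(v_n([0,1)))`,
`Var(L^k χ_n) ≥ 4 a_n n⁴ (|J|/N)^{k-1}`, while `Var(χ_n) ≤ 2` and `sup|χ_n| ≤ 1`. -/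
theorem stmt4 (a : ℕ → ℝ) (N : ℕ) (hN : 1 ≤ N) (ha : StdHyp a)
    (k n : ℕ) (hk : 1 ≤ k) (hn : 1 ≤ n) :
    ENNReal.ofReal (4 * a n * (n : ℝ) ^ 4 * (lenJ a / N) ^ (k - 1)) ≤
      eVariationOn
        ((LR a N)^[k]
          (Set.indicator ((u a N 1)^[k - 1] '' (v a n '' Ico (0:ℝ) 1)) fun _ => (1:ℝ)))
        (Ico (0:ℝ) 1) ∧
    eVariationOn
        (Set.indicator ((u a N 1)^[k - 1] '' (v a n '' Ico (0:ℝ) 1)) fun _ => (1:ℝ))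
        (Ico (0:ℝ) 1) ≤ 2 ∧
    ∀ x ∈ Ico (0:ℝ) 1,
      |Set.indicator ((u a N 1)^[k - 1] '' (v a n '' Ico (0:ℝ) 1)) (fun _ => (1:ℝ)) x|
        ≤ 1 := by
  set V : Set ℝ := v a n '' Ico (0:ℝ) 1 with hV
  set χ : ℝ → ℝ := Set.indicator ((u a N 1)^[k - 1] '' V) fun _ => (1:ℝ) with hχ
  set c : ℝ := lenJ a / N with hc
  have hcpos : 0 < c := c_pos ha hN
  refine ⟨?_, ?_, ?_⟩
  · -- main lower bound
    have hiter : ∀ j, j ≤ k-1 → ∀ x ∈ Ico (0:ℝ) 1,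
        ((LR a N)^[j] χ) x
          = c^j * Set.indicator ((u a N 1)^[k-1-j] '' V) (fun _ => (1:ℝ)) x := by
      intro j
      induction j with
      | zero => intro _ x hx; simp [hχ]
      | succ j ih =>
        intro hj x hx
        have hj' : j ≤ k-1 := by omega
        rw [Function.iterate_succ_apply']
        have hEq : EqOn ((LR a N)^[j] χ)
            (fun y => c^j * Set.indicator ((u a N 1)^[k-1-j] '' V) (fun _ => (1:ℝ)) y)
            (Ico (0:ℝ) 1) := fun y hy => ih hj' y hy
        rw [LR_congr ha hN hEq hx, LR_smul]
        have hk1j : k-1-j = (k-1-(j+1)) + 1 := by omega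
        have hSrw : (u a N 1)^[k-1-j] '' V
            = u a N 1 '' ((u a N 1)^[k-1-(j+1)] '' V) := by
          rw [hk1j, Function.iterate_succ', Set.image_comp]
        rw [hSrw, LR_step ha hN hn (S_sub01 ha hN hn _) hx]
        ring
    have hfin : ∀ x ∈ Ico (0:ℝ) 1, ((LR a N)^[k] χ) x = c^(k-1) * vd a n x := by
      intro x hx
      have hkk : k = (k-1) + 1 := by omega
      have h1 : (LR a N)^[k] χ x = (LR a N) ((LR a N)^[k-1] χ) x := by
        conv_lhs => rw [hkk]
        rw [Function.iterate_succ_apply']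
      rw [h1]
      have hEq : EqOn ((LR a N)^[k-1] χ)
          (fun y => c^(k-1) * Set.indicator ((u a N 1)^[k-1-(k-1)] '' V)
            (fun _ => (1:ℝ)) y) (Ico (0:ℝ) 1) :=
        fun y hy => hiter (k-1) le_rfl y hy
      rw [LR_congr ha hN hEq hx, LR_smul]
      have h0 : (u a N 1)^[k-1-(k-1)] '' V = V := by
        simp
      rw [h0, hV, LR_base ha hN hn hx]
    rw [eVariationOn.eq_of_eqOn (fun x hx => hfin x hx)]
    exact grid_var ha hn (le_of_lt (pow_pos hcpos (k-1)))
  · obtain ⟨α, β, hαβ, hS⟩ := S_Ico ha hN hn (k-1)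
    rw [hχ, hV] at *
    rw [hS]
    exact indicator_Ico_var_le_two hαβ _
  · intro x hx
    by_cases hmem : x ∈ (u a N 1)^[k - 1] '' V
    · rw [hχ, Set.indicator_of_mem hmem]; norm_num
    · rw [hχ, Set.indicator_of_notMem hmem]; norm_num


end Gouezel
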